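/- arXiv:1804.09255 — 2 statements merged into one kernel-verified Lean document; each statement's English description precedes it below -/
import Mathlib

section
/- Let 0<q<1 and r>0. Suppose σ is a nonzero nonnegative measure on Ω and G a positive kernel such that the weighted norm inequality ‖G(f dσ)‖_{L^r(σ)} ≤ C ‖f‖_{L^{r/q}(σ)} holds for all f ∈ L^{r/q}(σ), and suppose w ∈ L^r(σ) is a given nonnegative function with w > 0. Define u_0 = w and u_{j+1} = G(u_j^q dσ) + w. Then the sequence (u_j) is nondecreasing, each u_j ∈ L^r(σ), and ‖u_j‖_{L^r(σ)} ≤ (C·c)^{1/(1−q)} + (c/(1−q)) ‖w‖_{L^r(σ)} for all j, where c = max(1, 2^{(1−r)/r}). Consequently the pointwise limit u = lim u_j is a positive solution in L^r(σ) of u = G(u^q dσ) + w. -/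
open MeasureTheory ENNReal Set

/-- Potential of a measure with respect to a kernel. -/
noncomputable def pot {Ω : Type*} [MeasurableSpace Ω] (G : Ω → Ω → ℝ≥0∞)
    (ν : Measure Ω) (x : Ω) : ℝ≥0∞ :=
  ∫⁻ y, G x y ∂ν

private lemma iSup_rpow_comm (f : ℕ → ℝ≥0∞) {s : ℝ} (hs : 0 < s) :
    (⨆ j, f j) ^ s = ⨆ j, f j ^ s := by
  have h := map_iSup (ENNReal.orderIsoRpow s hs) f
  simp only [ENNReal.orderIsoRpow_apply] at h
  exact h

private lemma lintegral_mul_iSup_aux {Ω : Type*} [MeasurableSpace Ω] (σ : Measure Ω)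
    (φ : Ω → ℝ≥0∞) (h : ℕ → Ω → ℝ≥0∞) (hm : ∀ j, Measurable (h j))
    (hmono : ∀ j y, h j y ≤ h (j + 1) y)
    (hpos : ∀ y, 0 < ⨆ j, h j y)
    (hfin : ∀ᵐ y ∂σ, (⨆ j, h j y) < ∞) :
    ∫⁻ y, φ y * (⨆ j, h j y) ∂σ = ⨆ j, ∫⁻ y, φ y * h j y ∂σ := by
  set H : Ω → ℝ≥0∞ := fun y => ⨆ j, h j y with hH
  have hHmeas : Measurable H := Measurable.iSup hm
  have hmono' : ∀ j k, j ≤ k → ∀ y, h j y ≤ h k y := by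
    intro j k hjk
    induction k with
    | zero => intro y; simp [Nat.le_zero.1 hjk]
    | succ k ih =>
      rcases Nat.lt_or_ge j (k+1) with hlt | hge
      · intro y; exact le_trans (ih (Nat.lt_succ_iff.1 hlt) y) (hmono k y)
      · have : j = k + 1 := le_antisymm hjk hge
        subst this; intro y; exact le_rfl
  set ψ : ℕ → Ω → ℝ≥0∞ := fun j y => h j y / H y with hψ
  have hψmeas : ∀ j, Measurable (ψ j) := fun j => (hm j).div hHmeas
  have hψmono : ∀ j k, j ≤ k → ∀ y, ψ j y ≤ ψ k y := fun j k hjk y =>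
    ENNReal.div_le_div_right (hmono' j k hjk y) _
  have hψle1 : ∀ j y, ψ j y ≤ 1 := by
    intro j y
    exact le_trans (ENNReal.div_le_div_right (le_iSup (fun j => h j y) j) _)
      ENNReal.div_self_le_one
  have hψsup : ∀ y, (⨆ j, ψ j y) = H y / H y := by
    intro y
    simp only [hψ]
    rw [← ENNReal.iSup_div]
  apply le_antisymm
  · -- hard direction
    have key1 : ∀ j, ∫⁻ y, (φ y * H y) * ψ j y ∂σ = ∫⁻ y, φ y * h j y ∂σ := by
      intro j
      apply lintegral_congr_ae
      filter_upwards [hfin] with y hy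
      rw [mul_assoc, ENNReal.mul_div_cancel (hpos y).ne' hy.ne]
    have step0 : ∫⁻ y, φ y * H y ∂σ = ∫⁻ y, (φ y * H y) * (H y / H y) ∂σ := by
      apply lintegral_congr_ae
      filter_upwards [hfin] with y hy
      rw [ENNReal.div_self (hpos y).ne' hy.ne, mul_one]
    rw [step0, ← iSup_lintegral_measurable_le_eq_lintegral
      (fun y => (φ y * H y) * (H y / H y))]
    refine iSup_le fun g => iSup_le fun hgmeas => iSup_le fun hgle => ?_
    have hgF : ∀ y, g y ≤ φ y * H y := fun y =>
      le_trans (hgle y) (by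
        calc (φ y * H y) * (H y / H y) ≤ (φ y * H y) * 1 :=
          mul_le_mul_right ENNReal.div_self_le_one _
        _ = φ y * H y := mul_one _)
    have hgsup : ∀ y, g y = ⨆ j, g y * ψ j y := by
      intro y
      rw [← ENNReal.mul_iSup, hψsup]
      by_cases hy : H y = ∞
      · have : g y = 0 := by
          have h0 := hgle y
          simp only [hy, ENNReal.div_top, mul_zero] at h0
          exact le_antisymm h0 zero_le
        rw [this, zero_mul]
      · rw [ENNReal.div_self (hpos y).ne' hy, mul_one]
    calc ∫⁻ y, g y ∂σ = ∫⁻ y, ⨆ j, g y * ψ j y ∂σ := lintegral_congr fun y => hgsup y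
      _ = ⨆ j, ∫⁻ y, g y * ψ j y ∂σ := by
        apply lintegral_iSup (fun j => hgmeas.mul (hψmeas j))
        intro j k hjk y
        exact mul_le_mul_right (hψmono j k hjk y) _
      _ ≤ ⨆ j, ∫⁻ y, (φ y * H y) * ψ j y ∂σ := by
        gcongr with j y
        exact hgF y
      _ = ⨆ j, ∫⁻ y, φ y * h j y ∂σ := by
        exact iSup_congr key1
  · refine iSup_le fun j => lintegral_mono fun y => ?_
    exact mul_le_mul_right (le_iSup (fun j => h j y) j) _

private lemma Lp_add_le_c {Ω : Type*} [MeasurableSpace Ω] {σ : Measure Ω}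
    {f g : Ω → ℝ≥0∞} (hf : AEMeasurable f σ) (hg : AEMeasurable g σ)
    {r : ℝ} (hr : 0 < r) :
    (∫⁻ x, (f x + g x) ^ r ∂σ) ^ (1 / r) ≤
      ENNReal.ofReal (max 1 (2 ^ ((1 - r) / r))) *
        ((∫⁻ x, f x ^ r ∂σ) ^ (1 / r) + (∫⁻ x, g x ^ r ∂σ) ^ (1 / r)) := by
  rcases le_or_gt 1 r with h1 | h1
  · have h := ENNReal.lintegral_Lp_add_le hf hg h1
    simp only [Pi.add_apply] at h
    calc (∫⁻ x, (f x + g x) ^ r ∂σ) ^ (1 / r)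
        ≤ (∫⁻ x, f x ^ r ∂σ) ^ (1 / r) + (∫⁻ x, g x ^ r ∂σ) ^ (1 / r) := h
      _ = 1 * ((∫⁻ x, f x ^ r ∂σ) ^ (1 / r) + (∫⁻ x, g x ^ r ∂σ) ^ (1 / r)) := (one_mul _).symm
      _ ≤ _ := by
        apply mul_le_mul_left
        exact ENNReal.one_le_ofReal.2 (le_max_left _ _)
  · have h := ENNReal.lintegral_Lp_add_le_of_le_one (μ := σ) (g := g) hf hr.le h1.le
    simp only [Pi.add_apply] at h
    refine le_trans h (mul_le_mul_left ?_ _)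
    have h2 : (2 : ℝ≥0∞) ^ (1 / r - 1) = ENNReal.ofReal (2 ^ (1 / r - 1) : ℝ) := by
      rw [← ENNReal.ofReal_rpow_of_pos (by norm_num : (0:ℝ) < 2)]
      norm_num
    rw [h2]
    apply ENNReal.ofReal_le_ofReal
    have : (1 : ℝ) / r - 1 = (1 - r) / r := by field_simp
    rw [this]
    exact le_max_right _ _

theorem iteration_scheme_inhomogeneous
    {Ω : Type*} [MeasurableSpace Ω]
    (G : Ω → Ω → ℝ≥0∞) (hGpos : ∀ x y, 0 < G x y)
    (σ : Measure Ω) (hσ : σ ≠ 0)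
    (q r : ℝ) (hq0 : 0 < q) (hq1 : q < 1) (hr : 0 < r)
    (C : ℝ≥0∞) (hC0 : 0 < C) (hC : C ≠ ⊤)
    (hnorm : ∀ f : Ω → ℝ≥0∞, Measurable f →
      (∫⁻ x, (∫⁻ y, G x y * f y ∂σ) ^ r ∂σ) ^ (1 / r) ≤
        C * (∫⁻ x, f x ^ (r / q) ∂σ) ^ (q / r))
    (w : Ω → ℝ≥0∞) (hw : Measurable w) (hwpos : ∀ x, 0 < w x)
    (hwLr : ∫⁻ x, w x ^ r ∂σ < ⊤)
    (u : ℕ → Ω → ℝ≥0∞) (humeas : ∀ j, Measurable (u j))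
    (hu0 : ∀ x, u 0 x = w x)
    (hurec : ∀ j x, u (j + 1) x = (∫⁻ y, G x y * u j y ^ q ∂σ) + w x) :
    (∀ j x, u j x ≤ u (j + 1) x) ∧
    (∀ j, ∫⁻ x, u j x ^ r ∂σ < ⊤) ∧
    (∀ j, (∫⁻ x, u j x ^ r ∂σ) ^ (1 / r) ≤
      (C * ENNReal.ofReal (max 1 (2 ^ ((1 - r) / r)))) ^ (1 / (1 - q)) +
        ENNReal.ofReal (max 1 (2 ^ ((1 - r) / r))) / ENNReal.ofReal (1 - q) *
          (∫⁻ x, w x ^ r ∂σ) ^ (1 / r)) ∧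
    (∀ x, 0 < ⨆ j, u j x) ∧
    (∀ x, (⨆ j, u j x) = (∫⁻ y, G x y * (⨆ j, u j y) ^ q ∂σ) + w x) ∧
    (∫⁻ x, (⨆ j, u j x) ^ r ∂σ < ⊤) := by
  have hrne : r ≠ 0 := hr.ne'
  have h1q : (0:ℝ) < 1 - q := by linarith
  set c : ℝ≥0∞ := ENNReal.ofReal (max 1 (2 ^ ((1 - r) / r))) with hcdef
  have hc1 : 1 ≤ c := ENNReal.one_le_ofReal.2 (le_max_left _ _)
  have hcne : c ≠ ⊤ := ENNReal.ofReal_ne_top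
  set e : ℝ≥0∞ := ENNReal.ofReal (1 - q) with hedef
  have he0 : e ≠ 0 := (ENNReal.ofReal_pos.2 h1q).ne'
  have hetop : e ≠ ⊤ := ENNReal.ofReal_ne_top
  have he1 : e ≤ 1 := ENNReal.ofReal_le_one.2 (by linarith)
  set k : ℝ≥0∞ := ENNReal.ofReal q with hkdef
  have hek : e + k = 1 := by
    rw [hedef, hkdef, ← ENNReal.ofReal_add (by linarith) hq0.le]
    norm_num
  set W : ℝ≥0∞ := (∫⁻ x, w x ^ r ∂σ) ^ (1 / r) with hWdef
  have hWtop : W ≠ ⊤ := (ENNReal.rpow_lt_top_of_nonneg (by positivity) hwLr.ne).ne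
  set A : ℝ≥0∞ := (C * c) ^ (1 / (1 - q)) with hAdef
  have hAtop : A ≠ ⊤ :=
    (ENNReal.rpow_lt_top_of_nonneg (by positivity) (ENNReal.mul_ne_top hC hcne)).ne
  set B : ℝ≥0∞ := A + c / e * W with hBdef
  have hBtop : B ≠ ⊤ := by
    rw [hBdef]
    exact ENNReal.add_ne_top.2
      ⟨hAtop, ENNReal.mul_ne_top (ENNReal.div_lt_top hcne he0).ne hWtop⟩
  -- monotonicity
  have hmono : ∀ j x, u j x ≤ u (j + 1) x := by
    intro j
    induction j with
    | zero => intro x; rw [hu0, hurec]; exact le_add_self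
    | succ j ih =>
      intro x
      rw [hurec, hurec]
      apply add_le_add_left
      apply lintegral_mono
      intro y
      exact mul_le_mul_right (ENNReal.rpow_le_rpow (ih y) hq0.le) _
  have hmonoU : ∀ x, Monotone fun j => u j x := fun x =>
    monotone_nat_of_le_succ fun j => hmono j x
  -- w is a.e. finite
  have hwfin : ∀ᵐ x ∂σ, w x < ∞ := by
    filter_upwards [ae_lt_top (hw.pow_const r) hwLr.ne] with x hx
    exact (ENNReal.rpow_lt_top_iff_of_pos hr).1 hx
  -- the potential terms are a.e. measurable
  have hTmeas : ∀ j, AEMeasurable (fun x => ∫⁻ y, G x y * u j y ^ q ∂σ) σ := by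
    intro j
    apply AEMeasurable.congr ((humeas (j + 1)).sub hw).aemeasurable
    filter_upwards [hwfin] with x hx
    rw [Pi.sub_apply, hurec]
    exact ENNReal.add_sub_cancel_right hx.ne
  -- norm bound on the potential term
  have hTnorm : ∀ j, (∫⁻ x, (∫⁻ y, G x y * u j y ^ q ∂σ) ^ r ∂σ) ^ (1 / r) ≤
      C * ((∫⁻ x, u j x ^ r ∂σ) ^ (1 / r)) ^ q := by
    intro j
    have h1 := hnorm (fun y => u j y ^ q) ((humeas j).pow_const q)
    have h2 : ∀ y : Ω, (u j y ^ q) ^ (r / q) = u j y ^ r := by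
      intro y
      rw [← ENNReal.rpow_mul]
      congr 1
      rw [mul_comm, div_mul_cancel₀ _ hq0.ne']
    simp only [h2] at h1
    have h3 : (∫⁻ x, u j x ^ r ∂σ) ^ (q / r) = ((∫⁻ x, u j x ^ r ∂σ) ^ (1 / r)) ^ q := by
      rw [← ENNReal.rpow_mul]
      congr 1
      rw [one_div, inv_mul_eq_div]
    rw [h3] at h1
    exact h1
  -- key algebraic inequality
  have hck : c / e * k + c = c / e := by
    have h1 : c / e * e = c := ENNReal.div_mul_cancel he0 hetop
    calc c / e * k + c = c / e * k + c / e * e := by rw [h1]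
      _ = c / e * (k + e) := by ring
      _ = c / e * 1 := by rw [add_comm k e, hek]
      _ = c / e := mul_one _
  have key : c * C * B ^ q + c * W ≤ B := by
    have hpq : Real.HolderConjugate (1 / (1 - q)) (1 / q) := by
      rw [Real.holderConjugate_iff]
      constructor
      · exact one_lt_one_div h1q (by linarith)
      · simp only [one_div, inv_inv]
        ring
    have hy := ENNReal.young_inequality (C * c) (B ^ q) hpq
    have e1 : (B ^ q) ^ ((1 : ℝ) / q) = B := by
      rw [← ENNReal.rpow_mul, mul_one_div, div_self hq0.ne', ENNReal.rpow_one]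
    have e2 : ENNReal.ofReal (1 / (1 - q)) = e⁻¹ := by
      rw [one_div, ENNReal.ofReal_inv_of_pos h1q, hedef]
    have e3 : ENNReal.ofReal (1 / q) = k⁻¹ := by
      rw [one_div, ENNReal.ofReal_inv_of_pos hq0, hkdef]
    have e4 : ∀ X : ℝ≥0∞, X / e⁻¹ = X * e := fun X => by rw [div_eq_mul_inv, inv_inv]
    have e5 : ∀ X : ℝ≥0∞, X / k⁻¹ = X * k := fun X => by rw [div_eq_mul_inv, inv_inv]
    rw [e1, e2, e3, e4, e5] at hy
    calc c * C * B ^ q + c * W = C * c * B ^ q + c * W := by ring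
      _ ≤ ((C * c) ^ (1 / (1 - q)) * e + B * k) + c * W := add_le_add_left hy _
      _ = A * e + B * k + c * W := by rw [hAdef]
      _ = A * (e + k) + (c / e * k + c) * W := by rw [hBdef]; ring
      _ = A + c / e * W := by rw [hek, hck, mul_one]
      _ = B := hBdef.symm
  -- uniform norm bound
  have hNle : ∀ j, (∫⁻ x, u j x ^ r ∂σ) ^ (1 / r) ≤ B := by
    intro j
    induction j with
    | zero =>
      simp only [hu0]
      rw [← hWdef]
      calc W = 1 * W := (one_mul W).symm
        _ ≤ c / e * W := by
          apply mul_le_mul_left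
          rw [← ENNReal.div_self he0 hetop]
          exact ENNReal.div_le_div_right (le_trans he1 hc1) e
        _ ≤ B := le_add_self
    | succ j ih =>
      calc (∫⁻ x, u (j + 1) x ^ r ∂σ) ^ (1 / r)
          = (∫⁻ x, ((∫⁻ y, G x y * u j y ^ q ∂σ) + w x) ^ r ∂σ) ^ (1 / r) := by
            simp only [hurec]
        _ ≤ c * ((∫⁻ x, (∫⁻ y, G x y * u j y ^ q ∂σ) ^ r ∂σ) ^ (1 / r) + W) := by
            have h := Lp_add_le_c (f := fun x => ∫⁻ y, G x y * u j y ^ q ∂σ) (g := w)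
              (hTmeas j) hw.aemeasurable hr
            rw [hcdef, hWdef]
            exact h
        _ ≤ c * (C * ((∫⁻ x, u j x ^ r ∂σ) ^ (1 / r)) ^ q + W) :=
            mul_le_mul_right (add_le_add_left (hTnorm j) W) c
        _ = c * C * ((∫⁻ x, u j x ^ r ∂σ) ^ (1 / r)) ^ q + c * W := by ring
        _ ≤ c * C * B ^ q + c * W :=
            add_le_add_left (mul_le_mul_right (ENNReal.rpow_le_rpow ih hq0.le) _) _
        _ ≤ B := key
  -- finiteness of each iterate
  have hrinv : ∀ X : ℝ≥0∞, (X ^ ((1:ℝ) / r)) ^ r = X := by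
    intro X
    rw [← ENNReal.rpow_mul, one_div, inv_mul_cancel₀ hrne, ENNReal.rpow_one]
  have hIntLe : ∀ j, ∫⁻ x, u j x ^ r ∂σ ≤ B ^ r := by
    intro j
    calc ∫⁻ x, u j x ^ r ∂σ = ((∫⁻ x, u j x ^ r ∂σ) ^ ((1:ℝ) / r)) ^ r := (hrinv _).symm
      _ ≤ B ^ r := ENNReal.rpow_le_rpow (hNle j) hr.le
  have hBr : B ^ r < ⊤ := ENNReal.rpow_lt_top_of_nonneg hr.le hBtop
  have hfinj : ∀ j, ∫⁻ x, u j x ^ r ∂σ < ⊤ := fun j => lt_of_le_of_lt (hIntLe j) hBr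
  -- positivity of the limit
  have hUpos : ∀ x, 0 < ⨆ j, u j x := by
    intro x
    have h := le_iSup (fun j => u j x) 0
    rw [hu0] at h
    exact lt_of_lt_of_le (hwpos x) h
  -- finiteness of limit integral
  have hUmeas : Measurable fun x => ⨆ j, u j x := Measurable.iSup humeas
  have hUint : ∫⁻ x, (⨆ j, u j x) ^ r ∂σ = ⨆ j, ∫⁻ x, u j x ^ r ∂σ := by
    have hsupr : ∀ x, (⨆ j, u j x) ^ r = ⨆ j, u j x ^ r := fun x =>
      iSup_rpow_comm (fun j => u j x) hr
    simp only [hsupr]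
    exact lintegral_iSup (fun j => (humeas j).pow_const r)
      (fun j l hjl x => ENNReal.rpow_le_rpow (hmonoU x hjl) hr.le)
  have hUfin_int : ∫⁻ x, (⨆ j, u j x) ^ r ∂σ < ⊤ := by
    rw [hUint]
    exact lt_of_le_of_lt (iSup_le fun j => hIntLe j) hBr
  have hUfin : ∀ᵐ x ∂σ, (⨆ j, u j x) < ∞ := by
    filter_upwards [ae_lt_top (hUmeas.pow_const r) hUfin_int.ne] with x hx
    exact (ENNReal.rpow_lt_top_iff_of_pos hr).1 hx
  -- the fixed point equation
  have heq : ∀ x, (⨆ j, u j x) = (∫⁻ y, G x y * (⨆ j, u j y) ^ q ∂σ) + w x := by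
    intro x
    have haux := lintegral_mul_iSup_aux σ (fun y => G x y) (fun j y => u j y ^ q)
      (fun j => (humeas j).pow_const q)
      (fun j y => ENNReal.rpow_le_rpow (hmono j y) hq0.le)
      (fun y => by
        rw [← iSup_rpow_comm (fun j => u j y) hq0]
        exact ENNReal.rpow_pos_of_nonneg (hUpos y) hq0.le)
      (by
        filter_upwards [hUfin] with y hy
        rw [← iSup_rpow_comm (fun j => u j y) hq0]
        exact ENNReal.rpow_lt_top_of_nonneg hq0.le hy.ne)
    have hkey : ∫⁻ y, G x y * (⨆ j, u j y) ^ q ∂σ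
        = ⨆ j, ∫⁻ y, G x y * u j y ^ q ∂σ := by
      rw [← haux]
      apply lintegral_congr
      intro y
      rw [iSup_rpow_comm (fun j => u j y) hq0]
    rw [hkey]
    have hshift : (⨆ j, u j x) = ⨆ j, u (j + 1) x := by
      apply le_antisymm
      · exact iSup_le fun j => le_trans (hmono j x) (le_iSup (fun i => u (i + 1) x) j)
      · exact iSup_le fun j => le_iSup (fun i => u i x) (j + 1)
    rw [hshift]
    simp only [hurec]
    rw [← ENNReal.iSup_add]
  exact ⟨hmono, hfinj, hNle, hUpos, heq, hUfin_int⟩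
end

section
/- Let n ≥ 3 and 0 < γ < 1, and set p = n(1+γ)/(n+γ−1). Suppose u is a positive function on an open set Ω ⊆ ℝ^n with u ∈ W^{1,p}_loc(Ω), satisfying the Sobolev inequality ‖v‖_{L^{(1−γ)p/(2−p)}(Ω')} ≤ c‖∇v‖_{L^p(Ω')} on relatively compact open subsets Ω' (for truncations v = min(u,k)), and suppose E := ∫_Ω |∇u|^2 u^{γ−1} dx < ∞. Then |∇u| ∈ L^p(Ω) with ‖∇u‖_{L^p(Ω)}^{p(1+γ)/2} ≤ c' E^{p/2} for a constant c' depending only on n, γ, c. -/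
open MeasureTheory ENNReal Set

theorem gradient_Lp_from_generalized_energy
    {n : ℕ} (hn : 3 ≤ n) (γ : ℝ) (hγ0 : 0 < γ) (hγ1 : γ < 1)
    (c : ℝ) (hc : 0 < c)
    (Ω : Set (EuclideanSpace ℝ (Fin n))) (hΩ : IsOpen Ω)
    (u : EuclideanSpace ℝ (Fin n) → ℝ)
    (hupos : ∀ x ∈ Ω, 0 < u x)
    (hdiff : ∀ x ∈ Ω, DifferentiableAt ℝ u x)
    (hSob : ∀ k : ℕ, ∀ Ω' : Set (EuclideanSpace ℝ (Fin n)),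
      IsOpen Ω' → Ω' ⊆ Ω → IsCompact (closure Ω') →
      (∫⁻ x in Ω', ENNReal.ofReal (min (u x) k) ^
          ((1 - γ) * (n * (1 + γ) / (n + γ - 1)) / (2 - n * (1 + γ) / (n + γ - 1)))) ^
        ((2 - n * (1 + γ) / (n + γ - 1)) / ((1 - γ) * (n * (1 + γ) / (n + γ - 1)))) ≤
      ENNReal.ofReal c *
        (∫⁻ x in Ω', ENNReal.ofReal ‖gradient u x‖ ^ (n * (1 + γ) / (n + γ - 1))) ^
          ((n + γ - 1) / (n * (1 + γ))))
    (hE : ∫⁻ x in Ω,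
        ENNReal.ofReal ‖gradient u x‖ ^ (2 : ℝ) * ENNReal.ofReal (u x) ^ (γ - 1) < ⊤) :
    (∫⁻ x in Ω, ENNReal.ofReal ‖gradient u x‖ ^ (n * (1 + γ) / (n + γ - 1)) < ⊤) ∧
    ∃ c' : ℝ≥0∞, c' ≠ ⊤ ∧
      ((∫⁻ x in Ω, ENNReal.ofReal ‖gradient u x‖ ^ (n * (1 + γ) / (n + γ - 1))) ^
          ((n + γ - 1) / (n * (1 + γ)))) ^ ((n * (1 + γ) / (n + γ - 1)) * (1 + γ) / 2) ≤
        c' * (∫⁻ x in Ω,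
          ENNReal.ofReal ‖gradient u x‖ ^ (2 : ℝ) * ENNReal.ofReal (u x) ^ (γ - 1)) ^
            ((n * (1 + γ) / (n + γ - 1)) / 2) := by
  classical
  have hn3 : (3:ℝ) ≤ (n:ℝ) := by exact_mod_cast hn
  set p : ℝ := ↑n * (1 + γ) / (↑n + γ - 1) with hpdef
  have hd : (0:ℝ) < ↑n + γ - 1 := by linarith
  have hnum : (0:ℝ) < ↑n * (1 + γ) := by nlinarith
  have hp_pos : 0 < p := div_pos hnum hd
  have hp2 : p < 2 := by rw [hpdef, div_lt_iff₀ hd]; nlinarith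
  have h2p : (0:ℝ) < 2 - p := by linarith
  have h1γ : (0:ℝ) < 1 - γ := by linarith
  have h1γ' : (0:ℝ) < 1 + γ := by linarith
  have hpne : p ≠ 0 := hp_pos.ne'
  have h2pne : (2:ℝ) - p ≠ 0 := h2p.ne'
  have h1γne : (1:ℝ) - γ ≠ 0 := h1γ.ne'
  have h1γ'ne : (1:ℝ) + γ ≠ 0 := h1γ'.ne'
  -- measurability
  have hgradm : Measurable fun x => gradient u x := by
    have h1 : Measurable fun x => fderiv ℝ u x := measurable_fderiv ℝ u
    exact ((InnerProductSpace.toDual ℝ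
      (EuclideanSpace ℝ (Fin n))).symm.continuous.measurable).comp h1
  have ham : Measurable fun x => ENNReal.ofReal ‖gradient u x‖ := hgradm.norm.ennreal_ofReal
  have hHm : Measurable fun x => ENNReal.ofReal ‖gradient u x‖ ^ p :=
    ENNReal.continuous_rpow_const.measurable.comp ham
  have hucont : ContinuousOn u Ω := fun x hx => (hdiff x hx).continuousAt.continuousWithinAt
  have huaem : AEMeasurable u (volume.restrict Ω) := hucont.aemeasurable hΩ.measurableSet
  -- exhaustion
  set S : ℕ → Set (EuclideanSpace ℝ (Fin n)) := fun j =>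
    Metric.ball 0 j ∩ {x | ((j:ℝ≥0∞) + 1)⁻¹ < EMetric.infEdist x Ωᶜ} with hSdef
  have hSopen : ∀ j, IsOpen (S j) := fun j =>
    Metric.isOpen_ball.inter (isOpen_lt continuous_const EMetric.continuous_infEdist)
  have hj1 : ∀ j : ℕ, ((j:ℝ≥0∞) + 1)⁻¹ ≠ 0 := by
    intro j
    simp [ENNReal.inv_ne_zero]
  have hSsub : ∀ j, S j ⊆ Ω := by
    intro j x hx
    by_contra hxo
    have h0 : EMetric.infEdist x Ωᶜ = 0 := EMetric.infEdist_zero_of_mem hxo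
    have := hx.2
    rw [mem_setOf_eq, h0] at this
    exact absurd this (by simp)
  have hclsub : ∀ j, closure (S j) ⊆ Ω := by
    intro j
    have hclosed : IsClosed {x | ((j:ℝ≥0∞) + 1)⁻¹ ≤ EMetric.infEdist x Ωᶜ} :=
      isClosed_le continuous_const EMetric.continuous_infEdist
    refine (closure_minimal (fun x hx => ?_) hclosed).trans ?_
    · have h2 : ((j:ℝ≥0∞) + 1)⁻¹ < EMetric.infEdist x Ωᶜ := hx.2
      exact h2.le
    intro x hx
    by_contra hxo
    have h0 : EMetric.infEdist x Ωᶜ = 0 := EMetric.infEdist_zero_of_mem hxo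
    rw [mem_setOf_eq, h0, le_zero_iff] at hx
    exact hj1 j hx
  have hScomp : ∀ j, IsCompact (closure (S j)) := by
    intro j
    refine IsCompact.of_isClosed_subset (isCompact_closedBall 0 j) isClosed_closure ?_
    exact closure_minimal (fun x hx => Metric.ball_subset_closedBall hx.1)
      Metric.isClosed_closedBall
  have hSmono : Monotone S := by
    intro i j hij x hx
    have h2 : ((i:ℝ≥0∞) + 1)⁻¹ < EMetric.infEdist x Ωᶜ := hx.2
    refine ⟨Metric.ball_subset_ball (by exact_mod_cast hij) hx.1, ?_⟩
    show ((j:ℝ≥0∞) + 1)⁻¹ < EMetric.infEdist x Ωᶜ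
    exact lt_of_le_of_lt
      (ENNReal.inv_le_inv.mpr (add_le_add (by exact_mod_cast hij) le_rfl)) h2
  have hSunion : ⋃ j, S j = Ω := by
    apply Subset.antisymm (iUnion_subset hSsub)
    intro x hx
    have hpos : 0 < EMetric.infEdist x Ωᶜ := by
      show 0 < Metric.infEDist x Ωᶜ
      rw [EMetric.infEdist_pos_iff_notMem_closure, hΩ.isClosed_compl.closure_eq]
      exact fun h => h hx
    obtain ⟨j₁, hj₁⟩ := ENNReal.exists_inv_nat_lt hpos.ne'
    obtain ⟨j₂, hj₂⟩ := exists_nat_gt ‖x‖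
    refine mem_iUnion.mpr ⟨j₁ + j₂, ?_, ?_⟩
    · rw [Metric.mem_ball, dist_zero_right]
      have : (j₂:ℝ) ≤ ((j₁ + j₂ : ℕ):ℝ) := by exact_mod_cast Nat.le_add_left j₂ j₁
      linarith
    · refine lt_of_le_of_lt ?_ hj₁
      refine ENNReal.inv_le_inv.mpr ?_
      exact le_trans (Nat.cast_le.mpr (Nat.le_add_right j₁ j₂)) le_self_add
  -- key per-j estimate
  set C₀ : ℝ≥0∞ := ENNReal.ofReal c ^ ((1 - γ) * p / 2) with hC₀def
  have hC₀ : C₀ ≠ ⊤ := ENNReal.rpow_ne_top_of_nonneg (by positivity) ENNReal.ofReal_ne_top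
  have key : ∀ j, (∫⁻ x in S j, ENNReal.ofReal ‖gradient u x‖ ^ p) ^ ((1 + γ)/2) ≤
      C₀ * (∫⁻ x in Ω, ENNReal.ofReal ‖gradient u x‖ ^ (2:ℝ) *
        ENNReal.ofReal (u x) ^ (γ - 1)) ^ (p/2) := by
    intro j
    have hcont : ContinuousOn u (closure (S j)) := hucont.mono (hclsub j)
    obtain ⟨M, hM⟩ := (hScomp j).exists_bound_of_continuousOn hcont
    obtain ⟨k, hk⟩ := exists_nat_gt M
    have hub : ∀ x ∈ S j, u x < (k:ℝ) := by
      intro x hx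
      have h1 : u x ≤ |u x| := le_abs_self _
      have h2 : |u x| ≤ M := by
        have := hM x (subset_closure hx)
        rwa [Real.norm_eq_abs] at this
      linarith
    have hmeasS : MeasurableSet (S j) := (hSopen j).measurableSet
    have huj : AEMeasurable u (volume.restrict (S j)) :=
      huaem.mono_measure (Measure.restrict_mono (hSsub j) le_rfl)
    have hbXaem : AEMeasurable (fun x => ENNReal.ofReal ‖gradient u x‖ ^ (2:ℝ) *
        ENNReal.ofReal (u x) ^ (γ - 1)) (volume.restrict (S j)) :=
      ((ENNReal.continuous_rpow_const.measurable.comp ham).aemeasurable).mul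
        (ENNReal.continuous_rpow_const.measurable.comp_aemeasurable huj.ennreal_ofReal)
    have hFaem : AEMeasurable (fun x => (ENNReal.ofReal ‖gradient u x‖ ^ (2:ℝ) *
        ENNReal.ofReal (u x) ^ (γ - 1)) ^ (p/2)) (volume.restrict (S j)) :=
      ENNReal.continuous_rpow_const.measurable.comp_aemeasurable hbXaem
    have hGaem : AEMeasurable (fun x => ENNReal.ofReal (u x) ^ ((1 - γ) * p / 2))
        (volume.restrict (S j)) :=
      ENNReal.continuous_rpow_const.measurable.comp_aemeasurable huj.ennreal_ofReal
    have hconj : ((2:ℝ)/p).HolderConjugate (2/(2 - p)) := by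
      rw [Real.holderConjugate_iff]
      constructor
      · rw [lt_div_iff₀ hp_pos]; linarith
      · rw [inv_div, inv_div, ← add_div, show p + (2 - p) = 2 by ring]
        norm_num
    have hHolder := ENNReal.lintegral_mul_le_Lp_mul_Lq (volume.restrict (S j)) hconj
      hFaem hGaem
    rw [show (1:ℝ)/(2/p) = p/2 by rw [one_div_div],
        show (1:ℝ)/(2/(2 - p)) = (2 - p)/2 by rw [one_div_div]] at hHolder
    have e1 : ∀ x : EuclideanSpace ℝ (Fin n),
        ((ENNReal.ofReal ‖gradient u x‖ ^ (2:ℝ) * ENNReal.ofReal (u x) ^ (γ - 1)) ^ (p/2))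
          ^ ((2:ℝ)/p) =
        ENNReal.ofReal ‖gradient u x‖ ^ (2:ℝ) * ENNReal.ofReal (u x) ^ (γ - 1) := by
      intro x
      rw [← ENNReal.rpow_mul, show p/2 * (2/p) = 1 by field_simp, ENNReal.rpow_one]
    have e2 : ∀ x : EuclideanSpace ℝ (Fin n),
        (ENNReal.ofReal (u x) ^ ((1 - γ) * p / 2)) ^ ((2:ℝ)/(2 - p)) =
        ENNReal.ofReal (u x) ^ ((1 - γ) * p / (2 - p)) := by
      intro x
      rw [← ENNReal.rpow_mul]
      congr 1
      field_simp
    simp only [Pi.mul_apply, e1, e2] at hHolder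
    -- LHS of Hölder equals the p-integral
    have hpt : ∀ x ∈ S j,
        (ENNReal.ofReal ‖gradient u x‖ ^ (2:ℝ) * ENNReal.ofReal (u x) ^ (γ - 1)) ^ (p/2) *
          ENNReal.ofReal (u x) ^ ((1 - γ) * p / 2) =
        ENNReal.ofReal ‖gradient u x‖ ^ p := by
      intro x hx
      have hbx0 : ENNReal.ofReal (u x) ≠ 0 :=
        (ENNReal.ofReal_pos.mpr (hupos x (hSsub j hx))).ne'
      have hbxt : ENNReal.ofReal (u x) ≠ ⊤ := ENNReal.ofReal_ne_top
      rw [ENNReal.mul_rpow_of_nonneg _ _ (by positivity), ← ENNReal.rpow_mul,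
        ← ENNReal.rpow_mul, mul_assoc, ← ENNReal.rpow_add _ _ hbx0 hbxt,
        show (γ - 1) * (p/2) + (1 - γ) * p / 2 = 0 by ring, ENNReal.rpow_zero, mul_one,
        show (2:ℝ) * (p/2) = p by ring]
    have hAjeq : (∫⁻ x in S j,
        (ENNReal.ofReal ‖gradient u x‖ ^ (2:ℝ) * ENNReal.ofReal (u x) ^ (γ - 1)) ^ (p/2) *
          ENNReal.ofReal (u x) ^ ((1 - γ) * p / 2)) =
        ∫⁻ x in S j, ENNReal.ofReal ‖gradient u x‖ ^ p :=
      setLIntegral_congr_fun hmeasS hpt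
    rw [hAjeq] at hHolder
    -- Sobolev inequality
    have hsob := hSob k (S j) (hSopen j) (hSsub j) (hScomp j)
    have hmin : (∫⁻ x in S j, ENNReal.ofReal (min (u x) (k:ℝ)) ^ ((1 - γ) * p / (2 - p))) =
        ∫⁻ x in S j, ENNReal.ofReal (u x) ^ ((1 - γ) * p / (2 - p)) :=
      setLIntegral_congr_fun hmeasS (fun x hx => by
        rw [min_eq_left (hub x hx).le])
    have hinvp : (↑n + γ - 1) / (↑n * (1 + γ)) = 1/p := by rw [hpdef, one_div_div]
    rw [hmin, hinvp] at hsob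
    -- combine
    have hTbound : (∫⁻ x in S j, ENNReal.ofReal (u x) ^ ((1 - γ) * p / (2 - p))) ^ ((2 - p)/2) ≤
        C₀ * (∫⁻ x in S j, ENNReal.ofReal ‖gradient u x‖ ^ p) ^ ((1 - γ)/2) := by
      have heq : (∫⁻ x in S j, ENNReal.ofReal (u x) ^ ((1 - γ) * p / (2 - p))) ^ ((2 - p)/2) =
          ((∫⁻ x in S j, ENNReal.ofReal (u x) ^ ((1 - γ) * p / (2 - p)))
            ^ ((2 - p)/((1 - γ) * p))) ^ ((1 - γ) * p / 2) := by
        rw [← ENNReal.rpow_mul]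
        congr 1
        field_simp
      rw [heq]
      calc ((∫⁻ x in S j, ENNReal.ofReal (u x) ^ ((1 - γ) * p / (2 - p)))
            ^ ((2 - p)/((1 - γ) * p))) ^ ((1 - γ) * p / 2)
          ≤ (ENNReal.ofReal c *
              (∫⁻ x in S j, ENNReal.ofReal ‖gradient u x‖ ^ p) ^ (1/p)) ^ ((1 - γ) * p / 2) :=
            ENNReal.rpow_le_rpow hsob (by positivity)
        _ = C₀ * (∫⁻ x in S j, ENNReal.ofReal ‖gradient u x‖ ^ p) ^ ((1 - γ)/2) := by
            rw [ENNReal.mul_rpow_of_nonneg _ _ (by positivity), ← ENNReal.rpow_mul, hC₀def]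
            congr 2
            field_simp
    -- finiteness
    have hTfin : (∫⁻ x in S j, ENNReal.ofReal (u x) ^ ((1 - γ) * p / (2 - p))) < ⊤ := by
      have hle : (∫⁻ x in S j, ENNReal.ofReal (u x) ^ ((1 - γ) * p / (2 - p))) ≤
          ENNReal.ofReal (k:ℝ) ^ ((1 - γ) * p / (2 - p)) * volume (S j) := by
        refine (setLIntegral_mono' hmeasS fun x hx => ?_).trans_eq (setLIntegral_const _ _)
        exact ENNReal.rpow_le_rpow (ENNReal.ofReal_le_ofReal (hub x hx).le) (by positivity)
      refine lt_of_le_of_lt hle (ENNReal.mul_lt_top ?_ ?_)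
      · exact ENNReal.rpow_lt_top_of_nonneg (by positivity) ENNReal.ofReal_ne_top
      · exact lt_of_le_of_lt (measure_mono subset_closure) (hScomp j).measure_lt_top
    have hAjfin : (∫⁻ x in S j, ENNReal.ofReal ‖gradient u x‖ ^ p) ≠ ⊤ := by
      refine (hHolder.trans_lt (ENNReal.mul_lt_top ?_ ?_)).ne
      · refine ENNReal.rpow_lt_top_of_nonneg (by positivity) ?_
        exact (lt_of_le_of_lt (lintegral_mono_set (hSsub j)) hE).ne
      · exact ENNReal.rpow_lt_top_of_nonneg (by positivity) hTfin.ne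
    have hmain : (∫⁻ x in S j, ENNReal.ofReal ‖gradient u x‖ ^ p) ≤
        (C₀ * (∫⁻ x in Ω, ENNReal.ofReal ‖gradient u x‖ ^ (2:ℝ) *
          ENNReal.ofReal (u x) ^ (γ - 1)) ^ (p/2)) *
        (∫⁻ x in S j, ENNReal.ofReal ‖gradient u x‖ ^ p) ^ ((1 - γ)/2) := by
      calc (∫⁻ x in S j, ENNReal.ofReal ‖gradient u x‖ ^ p)
          ≤ (∫⁻ x in S j, ENNReal.ofReal ‖gradient u x‖ ^ (2:ℝ) *
              ENNReal.ofReal (u x) ^ (γ - 1)) ^ (p/2) *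
            (∫⁻ x in S j, ENNReal.ofReal (u x) ^ ((1 - γ) * p / (2 - p))) ^ ((2 - p)/2) :=
            hHolder
        _ ≤ (∫⁻ x in Ω, ENNReal.ofReal ‖gradient u x‖ ^ (2:ℝ) *
              ENNReal.ofReal (u x) ^ (γ - 1)) ^ (p/2) *
            (C₀ * (∫⁻ x in S j, ENNReal.ofReal ‖gradient u x‖ ^ p) ^ ((1 - γ)/2)) := by
            refine mul_le_mul' (ENNReal.rpow_le_rpow (lintegral_mono_set (hSsub j))
              (by positivity)) hTbound
        _ = _ := by ring
    set Aj := ∫⁻ x in S j, ENNReal.ofReal ‖gradient u x‖ ^ p with hAjdef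
    by_cases hA0 : Aj = 0
    · rw [hA0, ENNReal.zero_rpow_of_pos (by positivity)]
      exact zero_le
    · have h1 : Aj ^ ((1 - γ)/2) ≠ 0 :=
        (ENNReal.rpow_pos (pos_iff_ne_zero.mpr hA0) hAjfin).ne'
      have h2 : Aj ^ ((1 - γ)/2) ≠ ⊤ := ENNReal.rpow_ne_top_of_nonneg (by positivity) hAjfin
      rw [← ENNReal.mul_le_mul_iff_left h1 h2]
      calc Aj ^ ((1 + γ)/2) * Aj ^ ((1 - γ)/2)
          = Aj := by
            rw [← ENNReal.rpow_add _ _ hA0 hAjfin,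
              show (1 + γ)/2 + (1 - γ)/2 = 1 by ring, ENNReal.rpow_one]
        _ ≤ _ := hmain
  -- pass to the union
  have hAsup : (∫⁻ x in Ω, ENNReal.ofReal ‖gradient u x‖ ^ p) =
      ⨆ j, ∫⁻ x in S j, ENNReal.ofReal ‖gradient u x‖ ^ p := by
    rw [← lintegral_indicator hΩ.measurableSet, ← hSunion]
    rw [show (⋃ j, S j).indicator (fun x => ENNReal.ofReal ‖gradient u x‖ ^ p) =
        fun x => ⨆ j, (S j).indicator (fun x => ENNReal.ofReal ‖gradient u x‖ ^ p) x from
      funext fun x => indicator_iUnion_apply rfl _ _ _]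
    rw [lintegral_iSup (fun j => hHm.indicator (hSopen j).measurableSet)
      (fun i j hij => indicator_le_indicator_of_subset (hSmono hij) (fun _ => zero_le))]
    exact iSup_congr fun j => lintegral_indicator (hSopen j).measurableSet _
  have hAle : (∫⁻ x in Ω, ENNReal.ofReal ‖gradient u x‖ ^ p) ≤
      (C₀ * (∫⁻ x in Ω, ENNReal.ofReal ‖gradient u x‖ ^ (2:ℝ) *
        ENNReal.ofReal (u x) ^ (γ - 1)) ^ (p/2)) ^ (2/(1 + γ)) := by
    rw [hAsup]
    refine iSup_le fun j => ?_
    calc (∫⁻ x in S j, ENNReal.ofReal ‖gradient u x‖ ^ p)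
        = ((∫⁻ x in S j, ENNReal.ofReal ‖gradient u x‖ ^ p) ^ ((1 + γ)/2)) ^ (2/(1 + γ)) := by
          rw [← ENNReal.rpow_mul, show (1 + γ)/2 * (2/(1 + γ)) = 1 by field_simp,
            ENNReal.rpow_one]
      _ ≤ _ := ENNReal.rpow_le_rpow (key j) (by positivity)
  have hKfin : (C₀ * (∫⁻ x in Ω, ENNReal.ofReal ‖gradient u x‖ ^ (2:ℝ) *
      ENNReal.ofReal (u x) ^ (γ - 1)) ^ (p/2)) ≠ ⊤ :=
    ENNReal.mul_ne_top hC₀ (ENNReal.rpow_ne_top_of_nonneg (by positivity) hE.ne)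
  have hfin : (∫⁻ x in Ω, ENNReal.ofReal ‖gradient u x‖ ^ p) < ⊤ :=
    lt_of_le_of_lt hAle (ENNReal.rpow_lt_top_of_nonneg (by positivity) hKfin)
  refine ⟨hfin, C₀, hC₀, ?_⟩
  have hexp : ((∫⁻ x in Ω, ENNReal.ofReal ‖gradient u x‖ ^ p) ^
      ((↑n + γ - 1) / (↑n * (1 + γ)))) ^ (p * (1 + γ) / 2) =
      (∫⁻ x in Ω, ENNReal.ofReal ‖gradient u x‖ ^ p) ^ ((1 + γ)/2) := by
    rw [← ENNReal.rpow_mul]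
    congr 1
    rw [hpdef]
    field_simp
  rw [hexp]
  calc (∫⁻ x in Ω, ENNReal.ofReal ‖gradient u x‖ ^ p) ^ ((1 + γ)/2)
      ≤ ((C₀ * (∫⁻ x in Ω, ENNReal.ofReal ‖gradient u x‖ ^ (2:ℝ) *
          ENNReal.ofReal (u x) ^ (γ - 1)) ^ (p/2)) ^ (2/(1 + γ))) ^ ((1 + γ)/2) :=
        ENNReal.rpow_le_rpow hAle (by positivity)
    _ = _ := by
        rw [← ENNReal.rpow_mul, show (2/(1 + γ)) * ((1 + γ)/2) = 1 by field_simp,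
          ENNReal.rpow_one]
end
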